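/- Let f : ℝ → ℝ be a nonnegative C¹ function, let G : ℝ → ℝ be a C¹ function, and let a, b : ℝ → ℝ be C¹ functions with a(t) > 0 and b(t) > 0 for all t. Define, for (t,x,y,z) ∈ ℝ × ℝ³, the self-similar variable s = (x² + y²)/a(t)² + z²/b(t)², and set ρ(t,x,y,z) = f(s)/(a(t)² b(t)), u₁(t,x,y,z) = (a'(t)/a(t)) x − G(t) y, u₂(t,x,y,z) = G(t) x + (a'(t)/a(t)) y, u₃(t,x,y,z) = (b'(t)/b(t)) z. Then (ρ, u₁, u₂, u₃) satisfies the three-dimensional equation of conservation of mass ∂ₜρ + ∂ₓ(ρu₁) + ∂_y(ρu₂) + ∂_z(ρu₃) = 0 at every point (t,x,y,z). -/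

import Mathlib

set_option maxHeartbeats 1000000 in
/-- The rotational self-similar ansatz
    ρ = f(s)/(a(t)² b(t)), u₁ = (a'/a)x − G y, u₂ = G x + (a'/a)y, u₃ = (b'/b)z,
    with self-similar variable s = (x²+y²)/a(t)² + z²/b(t)², solves the 3D
    equation of conservation of mass ∂ₜρ + ∂ₓ(ρu₁) + ∂_y(ρu₂) + ∂_z(ρu₃) = 0. -/
theorem mass_equation_rotational_selfsimilar
    (f G a b : ℝ → ℝ)
    (hf : ContDiff ℝ 1 f) (hf_nonneg : ∀ s, 0 ≤ f s)
    (hG : ContDiff ℝ 1 G)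
    (ha : ContDiff ℝ 1 a) (hb : ContDiff ℝ 1 b)
    (ha_pos : ∀ t, 0 < a t) (hb_pos : ∀ t, 0 < b t)
    (ρ u₁ u₂ u₃ : ℝ → ℝ → ℝ → ℝ → ℝ)
    (hρ : ∀ t x y z, ρ t x y z =
      f ((x ^ 2 + y ^ 2) / (a t) ^ 2 + z ^ 2 / (b t) ^ 2) / ((a t) ^ 2 * b t))
    (hu₁ : ∀ t x y z, u₁ t x y z = (deriv a t / a t) * x - G t * y)
    (hu₂ : ∀ t x y z, u₂ t x y z = G t * x + (deriv a t / a t) * y)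
    (hu₃ : ∀ t x y z, u₃ t x y z = (deriv b t / b t) * z) :
    ∀ t x y z : ℝ,
      deriv (fun t' => ρ t' x y z) t
        + deriv (fun x' => ρ t x' y z * u₁ t x' y z) x
        + deriv (fun y' => ρ t x y' z * u₂ t x y' z) y
        + deriv (fun z' => ρ t x y z' * u₃ t x y z') z = 0 := by
  intro t x y z
  have hA0 : a t ≠ 0 := (ha_pos t).ne'
  have hB0 : b t ≠ 0 := (hb_pos t).ne'
  have hA2 : (a t) ^ 2 ≠ 0 := pow_ne_zero _ hA0
  have hB2 : (b t) ^ 2 ≠ 0 := pow_ne_zero _ hB0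
  have hAB : (a t) ^ 2 * b t ≠ 0 := mul_ne_zero hA2 hB0
  set s : ℝ := (x ^ 2 + y ^ 2) / (a t) ^ 2 + z ^ 2 / (b t) ^ 2 with hs_def
  have hfd : HasDerivAt f (deriv f s) s := (hf.differentiable one_ne_zero s).hasDerivAt
  have hAt : HasDerivAt a (deriv a t) t := (ha.differentiable one_ne_zero t).hasDerivAt
  have hBt : HasDerivAt b (deriv b t) t := (hb.differentiable one_ne_zero t).hasDerivAt
  have hA2t : HasDerivAt (fun t' => (a t') ^ 2) (2 * a t * deriv a t) t := by
    simpa [mul_comm] using hAt.fun_pow 2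
  have hB2t : HasDerivAt (fun t' => (b t') ^ 2) (2 * b t * deriv b t) t := by
    simpa [mul_comm] using hBt.fun_pow 2
  -- time derivative
  have hst : HasDerivAt (fun t' => (x ^ 2 + y ^ 2) / (a t') ^ 2 + z ^ 2 / (b t') ^ 2)
      ((0 * (a t) ^ 2 - (x ^ 2 + y ^ 2) * (2 * a t * deriv a t)) / ((a t) ^ 2) ^ 2
        + (0 * (b t) ^ 2 - z ^ 2 * (2 * b t * deriv b t)) / ((b t) ^ 2) ^ 2) t :=
    ((hasDerivAt_const t (x ^ 2 + y ^ 2)).div hA2t hA2).add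
      ((hasDerivAt_const t (z ^ 2)).div hB2t hB2)
  have hfst : HasDerivAt (fun t' => f ((x ^ 2 + y ^ 2) / (a t') ^ 2 + z ^ 2 / (b t') ^ 2))
      (deriv f s *
        ((0 * (a t) ^ 2 - (x ^ 2 + y ^ 2) * (2 * a t * deriv a t)) / ((a t) ^ 2) ^ 2
          + (0 * (b t) ^ 2 - z ^ 2 * (2 * b t * deriv b t)) / ((b t) ^ 2) ^ 2)) t :=
    hfd.comp t hst
  have hden : HasDerivAt (fun t' => (a t') ^ 2 * b t')
      (2 * a t * deriv a t * b t + (a t) ^ 2 * deriv b t) t := hA2t.mul hBt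
  have hT : deriv (fun t' => ρ t' x y z) t =
      (deriv f s *
        ((0 * (a t) ^ 2 - (x ^ 2 + y ^ 2) * (2 * a t * deriv a t)) / ((a t) ^ 2) ^ 2
          + (0 * (b t) ^ 2 - z ^ 2 * (2 * b t * deriv b t)) / ((b t) ^ 2) ^ 2)
        * ((a t) ^ 2 * b t)
        - f s * (2 * a t * deriv a t * b t + (a t) ^ 2 * deriv b t))
        / ((a t) ^ 2 * b t) ^ 2 := by
    simp only [hρ]
    exact (hfst.div hden hAB).deriv
  -- x derivative
  have hsx : HasDerivAt (fun x' => (x' ^ 2 + y ^ 2) / (a t) ^ 2 + z ^ 2 / (b t) ^ 2)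
      (2 * x / (a t) ^ 2) x := by
    have h1 : HasDerivAt (fun x' : ℝ => x' ^ 2 + y ^ 2) (2 * x) x := by
      simpa using (hasDerivAt_pow 2 x).add_const (y ^ 2)
    exact (h1.div_const _).add_const _
  have hρx : HasDerivAt (fun x' => f ((x' ^ 2 + y ^ 2) / (a t) ^ 2 + z ^ 2 / (b t) ^ 2)
      / ((a t) ^ 2 * b t)) (deriv f s * (2 * x / (a t) ^ 2) / ((a t) ^ 2 * b t)) x :=
    (hfd.comp x hsx).div_const _
  have hu1x : HasDerivAt (fun x' => deriv a t / a t * x' - G t * y) (deriv a t / a t) x := by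
    simpa using ((hasDerivAt_id x).const_mul (deriv a t / a t)).sub_const (G t * y)
  have hX : deriv (fun x' => ρ t x' y z * u₁ t x' y z) x =
      deriv f s * (2 * x / (a t) ^ 2) / ((a t) ^ 2 * b t) * (deriv a t / a t * x - G t * y)
        + f s / ((a t) ^ 2 * b t) * (deriv a t / a t) := by
    simp only [hρ, hu₁]
    exact (hρx.mul hu1x).deriv
  -- y derivative
  have hsy : HasDerivAt (fun y' => (x ^ 2 + y' ^ 2) / (a t) ^ 2 + z ^ 2 / (b t) ^ 2)
      (2 * y / (a t) ^ 2) y := by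
    have h1 : HasDerivAt (fun y' : ℝ => x ^ 2 + y' ^ 2) (2 * y) y := by
      simpa using (hasDerivAt_pow 2 y).const_add (x ^ 2)
    exact (h1.div_const _).add_const _
  have hρy : HasDerivAt (fun y' => f ((x ^ 2 + y' ^ 2) / (a t) ^ 2 + z ^ 2 / (b t) ^ 2)
      / ((a t) ^ 2 * b t)) (deriv f s * (2 * y / (a t) ^ 2) / ((a t) ^ 2 * b t)) y :=
    (hfd.comp y hsy).div_const _
  have hu2y : HasDerivAt (fun y' => G t * x + deriv a t / a t * y') (deriv a t / a t) y := by
    simpa using ((hasDerivAt_id y).const_mul (deriv a t / a t)).const_add (G t * x)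
  have hY : deriv (fun y' => ρ t x y' z * u₂ t x y' z) y =
      deriv f s * (2 * y / (a t) ^ 2) / ((a t) ^ 2 * b t) * (G t * x + deriv a t / a t * y)
        + f s / ((a t) ^ 2 * b t) * (deriv a t / a t) := by
    simp only [hρ, hu₂]
    exact (hρy.mul hu2y).deriv
  -- z derivative
  have hsz : HasDerivAt (fun z' => (x ^ 2 + y ^ 2) / (a t) ^ 2 + z' ^ 2 / (b t) ^ 2)
      (2 * z / (b t) ^ 2) z := by
    have h1 : HasDerivAt (fun z' : ℝ => z' ^ 2) (2 * z) z := by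
      simpa using hasDerivAt_pow 2 z
    exact (h1.div_const _).const_add _
  have hρz : HasDerivAt (fun z' => f ((x ^ 2 + y ^ 2) / (a t) ^ 2 + z' ^ 2 / (b t) ^ 2)
      / ((a t) ^ 2 * b t)) (deriv f s * (2 * z / (b t) ^ 2) / ((a t) ^ 2 * b t)) z :=
    (hfd.comp z hsz).div_const _
  have hu3z : HasDerivAt (fun z' => deriv b t / b t * z') (deriv b t / b t) z := by
    simpa using (hasDerivAt_id z).const_mul (deriv b t / b t)
  have hZ : deriv (fun z' => ρ t x y z' * u₃ t x y z') z =
      deriv f s * (2 * z / (b t) ^ 2) / ((a t) ^ 2 * b t) * (deriv b t / b t * z)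
        + f s / ((a t) ^ 2 * b t) * (deriv b t / b t) := by
    simp only [hρ, hu₃]
    exact (hρz.mul hu3z).deriv
  rw [hT, hX, hY, hZ]
  field_simp
  ring
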